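/- The function v(x,y,z,z̄) = ln(x+b(z,y)) + ln(x+b̄(z̄,y)) − 2·ln(z+z̄) satisfies the hyperbolic Boyer–Finley equation v_{z z̄} = (e^v)_{xx}, where b is holomorphic in z and b̄ is its complex conjugate (antiholomorphic in z̄), on a domain where x+b, x+b̄ and z+z̄ are positive. -/

import Mathlib

open Complex Filter

lemma conj_conj_hasDerivAt {g : ℂ → ℂ} {g' w : ℂ}
    (h : HasDerivAt g g' ((starRingEnd ℂ) w)) :
    HasDerivAt (fun z => (starRingEnd ℂ) (g ((starRingEnd ℂ) z))) ((starRingEnd ℂ) g') w := by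
  rw [hasDerivAt_iff_tendsto_slope] at h ⊢
  have hc : Tendsto (starRingEnd ℂ) (nhdsWithin w {w}ᶜ) (nhdsWithin ((starRingEnd ℂ) w) {(starRingEnd ℂ) w}ᶜ) := by
    refine tendsto_nhdsWithin_of_tendsto_nhds_of_eventually_within _
      (((continuous_conj).tendsto w).mono_left nhdsWithin_le_nhds) ?_
    filter_upwards [eventually_mem_nhdsWithin] with z hz
    simpa using fun hzw => hz (by simpa using congrArg (starRingEnd ℂ) hzw)
  have := ((continuous_conj).tendsto g').comp (h.comp hc)
  refine this.congr fun z => ?_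
  simp only [Function.comp, slope_def_field, map_div₀, map_sub]
  simp

lemma ne_zero_of_re_pos' {u : ℂ} (h : 0 < u.re) : u ≠ 0 := by
  intro h0; rw [h0] at h; simp at h

theorem boyer_finley_of_log_solution
    (b bb : ℂ → ℝ → ℂ)
    (hb : ∀ y, Differentiable ℂ (fun z => b z y))
    (hbb : ∀ (w : ℂ) (y : ℝ), bb w y = (starRingEnd ℂ) (b ((starRingEnd ℂ) w) y))
    (v : ℝ → ℝ → ℂ → ℂ → ℂ)
    (hv : ∀ (x y : ℝ) (z w : ℂ), v x y z w =
      Complex.log ((x : ℂ) + b z y) + Complex.log ((x : ℂ) + bb w y)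
        - 2 * Complex.log (z + w)) :
    ∀ (x y : ℝ) (z w : ℂ),
      0 < ((x : ℂ) + b z y).re → 0 < ((x : ℂ) + bb w y).re → 0 < (z + w).re →
      -- v_{z z̄} = (e^v)_{xx}
      deriv (fun z' => deriv (fun w' => v x y z' w') w) z =
        deriv (fun x' : ℝ => deriv (fun x'' : ℝ => Complex.exp (v x'' y z w)) x') x := by
  intro x y z w h1 h2 h3
  -- differentiability of bb in w
  have hbbd : HasDerivAt (fun w' => bb w' y)
      ((starRingEnd ℂ) (deriv (fun z => b z y) ((starRingEnd ℂ) w))) w := by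
    have : (fun w' => bb w' y) = fun w' => (starRingEnd ℂ) (b ((starRingEnd ℂ) w') y) :=
      funext fun w' => hbb w' y
    rw [this]
    exact conj_conj_hasDerivAt ((hb y ((starRingEnd ℂ) w)).hasDerivAt)
  set B := (x : ℂ) + b z y with hB
  set BB := (x : ℂ) + bb w y with hBB
  set C := deriv (fun w' => Complex.log ((x : ℂ) + bb w' y)) w with hC
  -- LHS
  have hLHS : deriv (fun z' => deriv (fun w' => v x y z' w') w) z = 2 * ((z + w) ^ 2)⁻¹ := by
    have hev : (fun z' => deriv (fun w' => v x y z' w') w)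
        =ᶠ[nhds z] fun z' => C - 2 * (z' + w)⁻¹ := by
      have hopen : IsOpen {z' : ℂ | 0 < (z' + w).re} :=
        isOpen_lt continuous_const (Complex.continuous_re.comp (continuous_id.add continuous_const))
      filter_upwards [hopen.eventually_mem h3] with z' hz'
      have heq : (fun w' => v x y z' w') = fun w' =>
          Complex.log ((x : ℂ) + b z' y) + Complex.log ((x : ℂ) + bb w' y)
            - 2 * Complex.log (z' + w') := funext fun w' => hv x y z' w'
      rw [heq]
      -- derivative of middle log term
      have hmid : HasDerivAt (fun w' => Complex.log ((x : ℂ) + bb w' y)) C w := by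
        have := (Complex.hasDerivAt_log (Or.inl h2)).comp w (hbbd.const_add (x : ℂ))
        rw [hC]; exact this.deriv ▸ this.congr_deriv rfl
      have hlast : HasDerivAt (fun w' => 2 * Complex.log (z' + w'))
          (2 * (z' + w)⁻¹) w := by
        have h0 : HasDerivAt (fun w' : ℂ => z' + w') 1 w := (hasDerivAt_id w).const_add z'
        have := (Complex.hasDerivAt_log (Or.inl hz')).comp w h0
        simpa using this.const_mul 2
      have : HasDerivAt (fun w' =>
          Complex.log ((x : ℂ) + b z' y) + Complex.log ((x : ℂ) + bb w' y)
            - 2 * Complex.log (z' + w')) (0 + C - 2 * (z' + w)⁻¹) w :=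
        ((hasDerivAt_const w _).add hmid).sub hlast
      rw [this.deriv]; ring
    rw [hev.deriv_eq]
    have hzw : z + w ≠ 0 := ne_zero_of_re_pos' h3
    have h0 : HasDerivAt (fun z' : ℂ => z' + w) 1 z := (hasDerivAt_id z).add_const w
    have hinv : HasDerivAt (fun z' : ℂ => (z' + w)⁻¹) (-1 / (z + w) ^ 2) z := h0.inv hzw
    have : HasDerivAt (fun z' : ℂ => C - 2 * (z' + w)⁻¹)
        (0 - 2 * (-1 / (z + w) ^ 2)) z :=
      (hasDerivAt_const z C).sub (hinv.const_mul 2)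
    rw [this.deriv]; field_simp; ring
  -- RHS
  set c : ℂ := ((z + w) ^ 2)⁻¹ with hc
  have hRHS : deriv (fun x' : ℝ => deriv (fun x'' : ℝ => Complex.exp (v x'' y z w)) x') x
      = 2 * ((z + w) ^ 2)⁻¹ := by
    have hev : (fun x'' : ℝ => Complex.exp (v x'' y z w))
        =ᶠ[nhds x] fun x'' : ℝ => ((x'' : ℂ) + b z y) * ((x'' : ℂ) + bb w y) * c := by
      have hcont1 : Continuous fun x'' : ℝ => ((x'' : ℂ) + b z y).re := by continuity
      have hcont2 : Continuous fun x'' : ℝ => ((x'' : ℂ) + bb w y).re := by continuity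
      filter_upwards [(isOpen_lt continuous_const hcont1).eventually_mem h1,
        (isOpen_lt continuous_const hcont2).eventually_mem h2] with x'' hx1 hx2
      rw [hv]
      have e1 : ((x'' : ℂ) + b z y) ≠ 0 := ne_zero_of_re_pos' hx1
      have e2 : ((x'' : ℂ) + bb w y) ≠ 0 := ne_zero_of_re_pos' hx2
      have e3 : z + w ≠ 0 := ne_zero_of_re_pos' h3
      rw [Complex.exp_sub, Complex.exp_add, Complex.exp_log e1, Complex.exp_log e2,
        two_mul, Complex.exp_add, Complex.exp_log e3]
      rw [hc]; field_simp
    rw [hev.deriv.deriv_eq]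
    -- deriv of polynomial
    have hQ : deriv (fun x'' : ℝ => ((x'' : ℂ) + b z y) * ((x'' : ℂ) + bb w y) * c)
        = fun x' : ℝ => (1 * ((x' : ℂ) + bb w y) + ((x' : ℂ) + b z y) * 1) * c := by
      funext x'
      have hx : HasDerivAt (fun t : ℝ => (t : ℂ)) 1 x' := by
        simpa using (hasDerivAt_id x').ofReal_comp
      exact (((hx.add_const (b z y)).mul (hx.add_const (bb w y))).mul_const c).deriv
    rw [hQ]
    have hx : HasDerivAt (fun t : ℝ => (t : ℂ)) 1 x := by
      simpa using (hasDerivAt_id x).ofReal_comp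
    have : HasDerivAt (fun x' : ℝ => (1 * ((x' : ℂ) + bb w y) + ((x' : ℂ) + b z y) * 1) * c)
        ((1 * 1 + 1 * 1) * c) x := by
      have h1' : HasDerivAt (fun x' : ℝ => 1 * ((x' : ℂ) + bb w y)) (1 * 1) x :=
        (hx.add_const (bb w y)).const_mul 1
      have h2' : HasDerivAt (fun x' : ℝ => ((x' : ℂ) + b z y) * 1) (1 * 1) x :=
        (hx.add_const (b z y)).mul_const 1
      exact (h1'.add h2').mul_const c
    rw [this.deriv, hc]; ring
  rw [hLHS, hRHS]
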